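/- Suppose a family of n intervals is partitioned into c chains, each chain is split into blocks of at most h consecutive intervals, and the block bottoms are properly colored as an interval graph with χ' colors where χ' equals the maximum number of block bottoms containing any point. Then χ' ≤ ω/h + c, where ω is the maximum number of intervals of the whole family containing any single point. -/

import Mathlib

open Classical in
/-- A family of intervals partitioned into c chains, each chain split into blocks of
at most h consecutive intervals (block bottoms at positions divisible by h).  If the
block bottoms are properly colored with χ' colors, χ' being the maximum number of
block bottoms containing any point, then χ' ≤ ω/h + c, where ω is the maximum number
of intervals of the whole family containing any single point. -/
theorem stmt_8 (c h : ℕ) (hh : 0 < h) (m : Fin c → ℕ)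
    (I : (k : Fin c) → Fin (m k) → Set ℝ)
    (hIcc : ∀ k p, ∃ a b : ℝ, a ≤ b ∧ I k p = Set.Icc a b)
    (hchain : ∀ k : Fin c, ∀ p q : Fin (m k), p ≤ q → I k q ⊆ I k p)
    (χ' ω : ℕ)
    (hχ' : IsGreatest {g : ℕ | ∃ x : ℝ, g = (Finset.univ.filter
        (fun kp : Σ k : Fin c, Fin (m k) =>
          (kp.2 : ℕ) % h = 0 ∧ x ∈ I kp.1 kp.2)).card} χ')
    (hω : IsGreatest {g : ℕ | ∃ x : ℝ, g = (Finset.univ.filter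
        (fun kp : Σ k : Fin c, Fin (m k) => x ∈ I kp.1 kp.2)).card} ω) :
    (χ' : ℝ) ≤ (ω : ℝ) / h + c := by
  obtain ⟨⟨x, hx⟩, -⟩ := hχ'
  obtain ⟨-, hub⟩ := hω
  set B : ∀ k : Fin c, Finset (Fin (m k)) := fun k =>
    Finset.univ.filter (fun p => (p : ℕ) % h = 0 ∧ x ∈ I k p) with hBdef
  set A : ∀ k : Fin c, Finset (Fin (m k)) := fun k =>
    Finset.univ.filter (fun p => x ∈ I k p) with hAdef
  have hcardχ : χ' = ∑ k, (B k).card := by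
    rw [hx, show (Finset.univ.filter (fun kp : Σ k : Fin c, Fin (m k) =>
        (kp.2 : ℕ) % h = 0 ∧ x ∈ I kp.1 kp.2))
        = Finset.univ.sigma (fun k => B k) from ?_, Finset.card_sigma]
    ext ⟨k, p⟩
    simp [hBdef]
  have hcardω : ∑ k, (A k).card ≤ ω := by
    have : (∑ k, (A k).card) ∈ {g : ℕ | ∃ x : ℝ, g = (Finset.univ.filter
        (fun kp : Σ k : Fin c, Fin (m k) => x ∈ I kp.1 kp.2)).card} := by
      refine ⟨x, ?_⟩
      rw [show (Finset.univ.filter (fun kp : Σ k : Fin c, Fin (m k) =>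
          x ∈ I kp.1 kp.2)) = Finset.univ.sigma (fun k => A k) from ?_,
        Finset.card_sigma]
      ext ⟨k, p⟩
      simp [hAdef]
    exact hub this
  have key : ∀ k, h * (B k).card ≤ (A k).card + h := by
    intro k
    rcases (B k).eq_empty_or_nonempty with hBe | hBne
    · simp [hBe]
    · set p : Fin (m k) := (B k).max' hBne with hpdef
      have hpB : p ∈ B k := (B k).max'_mem hBne
      rw [hBdef] at hpB
      simp only [Finset.mem_filter, Finset.mem_univ, true_and] at hpB
      obtain ⟨hpmod, hpx⟩ := hpB
      -- card bound for B k
      have h1 : (B k).card ≤ (p : ℕ) / h + 1 := by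
        have := Finset.card_le_card_of_injOn (fun q : Fin (m k) => (q : ℕ) / h)
          (s := B k) (t := Finset.range ((p : ℕ) / h + 1))
          (fun q hq => by
            have hle : q ≤ p := (B k).le_max' q hq
            simp only [Finset.mem_coe, Finset.mem_range]
            exact Nat.lt_succ_of_le (Nat.div_le_div_right hle))
          (fun q hq r hr hqr => by
            have hqr' : (q : ℕ) / h = (r : ℕ) / h := hqr
            simp only [hBdef, Finset.mem_coe, Finset.mem_filter, Finset.mem_univ,
              true_and] at hq hr
            have hq' : (q : ℕ) = h * ((q : ℕ) / h) :=
              (Nat.mul_div_cancel' (Nat.dvd_of_mod_eq_zero hq.1) ).symm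
            have hr' : (r : ℕ) = h * ((r : ℕ) / h) :=
              (Nat.mul_div_cancel' (Nat.dvd_of_mod_eq_zero hr.1)).symm
            exact Fin.ext (by rw [hq', hr', hqr']))
        simpa using this
      -- card bound for A k
      have h2 : (p : ℕ) + 1 ≤ (A k).card := by
        have hsub : Finset.Iic p ⊆ A k := by
          intro q hq
          simp only [Finset.mem_Iic] at hq
          simp only [hAdef, Finset.mem_filter, Finset.mem_univ, true_and]
          exact hchain k q p hq hpx
        calc (p : ℕ) + 1 = (Finset.Iic p).card := (Fin.card_Iic p).symm
          _ ≤ (A k).card := Finset.card_le_card hsub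
      have h3 : (p : ℕ) / h * h ≤ (p : ℕ) := Nat.div_mul_le_self _ _
      calc h * (B k).card ≤ h * ((p : ℕ) / h + 1) := Nat.mul_le_mul_left _ h1
        _ = (p : ℕ) / h * h + h := by ring
        _ ≤ (p : ℕ) + h := by omega
        _ ≤ (A k).card + h := by omega
  have main : h * χ' ≤ ω + h * c := by
    calc h * χ' = ∑ k, h * (B k).card := by rw [hcardχ, Finset.mul_sum]
      _ ≤ ∑ k, ((A k).card + h) := Finset.sum_le_sum (fun k _ => key k)
      _ = (∑ k, (A k).card) + h * c := by
          rw [Finset.sum_add_distrib]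
          simp [mul_comm]
      _ ≤ ω + h * c := Nat.add_le_add_right hcardω _
  have hh' : (0 : ℝ) < (h : ℝ) := by exact_mod_cast hh
  rw [div_add' _ _ _ (ne_of_gt hh'), le_div_iff₀ hh']
  have : (h : ℝ) * χ' ≤ ω + h * c := by exact_mod_cast main
  linarith
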